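/- Every prime-closed trace language is locally monitorable. -/
import Mathlib

/-!
Abstract setting for real Mazurkiewicz traces: `T` is the set ℝ of real
traces with the prefix partial order, `P : Set T` is the set 𝒫 of prime
traces, `cone p` is `pℝ = {t : p ≤ t}`.
-/

namespace MzTrace

variable {T : Type} [PartialOrder T]

/-- `cone p` models `pℝ`, the set of traces having `p` as a prefix. -/
def cone (p : T) : Set T := Set.Ici p

/-- A set of traces is prime-open (w.r.t. the set `P` of prime traces)
if it is a union `⋃ {pℝ : p ∈ U}` for some `U ⊆ P`. -/
def PrimeOpen (P : Set T) (L : Set T) : Prop := ∃ U ⊆ P, L = ⋃ p ∈ U, cone p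

/-- A set is prime-closed if its complement is prime-open. -/
def PrimeClosed (P : Set T) (L : Set T) : Prop := PrimeOpen P Lᶜ

/-- The prime closure of `L`: the intersection of all prime-closed supersets. -/
def primeClosure (P : Set T) (L : Set T) : Set T := ⋂₀ {K | PrimeClosed P K ∧ L ⊆ K}

/-- A set `C` of traces is coherent if it has a common upper bound (a trace
`t` with `C ⊆ pref(t)`). -/
def Coherent (C : Set T) : Prop := BddAbove C

/-- `primePref P L` is `𝒫(L)`, the set of prime prefixes of elements of `L`. -/
def primePref (P : Set T) (L : Set T) : Set T := {p ∈ P | ∃ t ∈ L, p ≤ t}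

/-- `L` is locally monitorable: for every prime `s` there is a prime `t`
with `{s,t}` coherent (i.e. `s ≤ tℝ`) and `tℝ ⊆ L` or `tℝ ⊆ Lᶜ`. -/
def LocallyMonitorable (P : Set T) (L : Set T) : Prop :=
  ∀ s ∈ P, ∃ t ∈ P, Coherent {s, t} ∧ (cone t ⊆ L ∨ cone t ⊆ Lᶜ)

end MzTrace

namespace MzTrace

variable {T : Type} [PartialOrder T]

/-- Lemma lem:b: every prime-closed trace language is locally
monitorable. -/
theorem primeClosed_locallyMonitorable (P : Set T) (L : Set T)
    (h : PrimeClosed P L) : LocallyMonitorable P L := by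
  obtain ⟨U, hUP, hU⟩ := h
  intro s hs
  by_cases hc : cone s ⊆ L
  · exact ⟨s, hs, ⟨s, by simp [upperBounds]⟩, Or.inl hc⟩
  · rw [Set.not_subset] at hc
    obtain ⟨r, hrs, hrL⟩ := hc
    have : r ∈ Lᶜ := hrL
    rw [hU] at this
    simp only [Set.mem_iUnion] at this
    obtain ⟨p, hpU, hpr⟩ := this
    refine ⟨p, hUP hpU, ⟨r, ?_⟩, Or.inr ?_⟩
    · intro x hx
      rcases hx with rfl | rfl
      · exact hrs
      · exact hpr
    · intro x hx
      rw [hU]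
      exact Set.mem_biUnion hpU hx
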